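/- Let Θ be a BK-space containing all canonical vectors e_i and suppose there is λ ≥ 1 such that ‖∑_{i=1}^n c_i e_i‖_Θ ≤ λ‖c‖_Θ for all c ∈ Θ and n ∈ ℕ (a λ-BK-space). If {g_i} ⊂ X* is a Θ-Bessel sequence for a Banach space X with bound B (i.e., {g_i(f)} ∈ Θ and ‖{g_i(f)}‖_Θ ≤ B‖f‖ for all f ∈ X), and if Y ⊂ X is a dense subspace, then each g_i extends uniquely to a continuous functional on X, and {g_i} is a Θ-Bessel sequence for X with bound λB when restricted through the closure of Y. -/

import Mathlib

open Filter Topology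

noncomputable section

def IsNormOn {X : Type*} [AddCommGroup X] [Module ℝ X] (S : Set X) (N : X → ℝ) : Prop :=
  (0 : X) ∈ S ∧ (∀ c ∈ S, ∀ d ∈ S, c + d ∈ S) ∧ (∀ (a : ℝ), ∀ c ∈ S, a • c ∈ S) ∧
  (∀ c ∈ S, 0 ≤ N c) ∧ (∀ c ∈ S, N c = 0 → c = 0) ∧
  (∀ c ∈ S, ∀ d ∈ S, N (c + d) ≤ N c + N d) ∧
  (∀ (a : ℝ), ∀ c ∈ S, N (a • c) = |a| * N c)

def IsBanachOn {X : Type*} [AddCommGroup X] [Module ℝ X] (S : Set X) (N : X → ℝ) : Prop :=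
  IsNormOn S N ∧ ∀ u : ℕ → X, (∀ n, u n ∈ S) →
    (∀ ε > 0, ∃ M, ∀ m ≥ M, ∀ n ≥ M, N (u m - u n) < ε) →
    ∃ x ∈ S, Tendsto (fun n => N (u n - x)) atTop (nhds 0)

def IsBKOn (S : Set (ℕ → ℝ)) (N : (ℕ → ℝ) → ℝ) : Prop :=
  IsBanachOn S N ∧ ∀ i, ∃ K : ℝ, ∀ c ∈ S, |c i| ≤ K * N c


/-- a `Θ`-Bessel sequence (bound `B`) on a dense subspace `Y` of a Banach
space `X`, where `Θ = (S, N)` is a `λ`-BK-space, extends uniquely to continuous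
functionals on `X`, and the extended sequence is `Θ`-Bessel for `X` with bound `λB`. -/
theorem bessel_extension_dense_subspace
    {X : Type*} [NormedAddCommGroup X] [NormedSpace ℝ X] [CompleteSpace X]
    (Y : Submodule ℝ X) (hY : Dense (Y : Set X))
    (S : Set (ℕ → ℝ)) (N : (ℕ → ℝ) → ℝ) (hBK : IsBKOn S N)
    (lam : ℝ) (hlam : 1 ≤ lam)
    (hcanon : ∀ i, Pi.single i (1 : ℝ) ∈ S)
    (htrunc : ∀ c ∈ S, ∀ n : ℕ, N (fun j => if j < n then c j else 0) ≤ lam * N c)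
    (g : ℕ → Y →ₗ[ℝ] ℝ) (B : ℝ)
    (hB : ∀ y : Y, (fun i => g i y) ∈ S ∧ N (fun i => g i y) ≤ B * ‖(y : X)‖) :
    (∀ i, ∃! G : X →L[ℝ] ℝ, ∀ y : Y, G y = g i y) ∧
    (∀ G : ℕ → X →L[ℝ] ℝ, (∀ i, ∀ y : Y, G i y = g i y) →
      ∀ f : X, (fun i => G i f) ∈ S ∧ N (fun i => G i f) ≤ lam * B * ‖f‖) := by
  obtain ⟨⟨⟨hS0, hSadd, hSsmul, hN0, hNdef, hNtri, hNsmul⟩, hcomplete⟩, hcoord⟩ := hBK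
  -- coordinate constants
  have hK : ∀ i, ∃ K : ℝ, 0 ≤ K ∧ ∀ c ∈ S, |c i| ≤ K * N c := by
    intro i
    obtain ⟨K, hKc⟩ := hcoord i
    have h1 := hKc _ (hcanon i)
    have h2 : (0:ℝ) ≤ N (Pi.single i (1:ℝ)) := hN0 _ (hcanon i)
    have h3 : (Pi.single i (1:ℝ) : ℕ → ℝ) i = 1 := by simp
    have hKpos : 0 ≤ K := by
      rw [h3, abs_one] at h1
      nlinarith
    exact ⟨K, hKpos, hKc⟩
  -- continuous versions of g i on Y
  have hbound : ∀ i, ∃ C : ℝ, ∀ y : Y, ‖g i y‖ ≤ C * ‖(y : X)‖ := by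
    intro i
    obtain ⟨K, hKpos, hKc⟩ := hK i
    refine ⟨K * B, fun y => ?_⟩
    have h1 : |(fun j => g j y) i| ≤ K * N (fun j => g j y) := hKc _ (hB y).1
    have h2 : N (fun j => g j y) ≤ B * ‖(y : X)‖ := (hB y).2
    calc ‖g i y‖ = |(fun j => g j y) i| := rfl
      _ ≤ K * N (fun j => g j y) := h1
      _ ≤ K * (B * ‖(y : X)‖) := by nlinarith
      _ = K * B * ‖(y : X)‖ := by ring
  have hdr : DenseRange (Y.subtypeL : Y →L[ℝ] X) := hY.denseRange_val
  have hui : IsUniformInducing (Y.subtypeL : Y →L[ℝ] X) :=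
    isUniformEmbedding_subtype_val.isUniformInducing
  -- existence of extensions
  have hexist : ∀ i, ∃ G : X →L[ℝ] ℝ, ∀ y : Y, G y = g i y := by
    intro i
    obtain ⟨C, hC⟩ := hbound i
    let gi : Y →L[ℝ] ℝ := LinearMap.mkContinuous (g i) C hC
    refine ⟨gi.extend Y.subtypeL, fun y => ?_⟩
    exact ContinuousLinearMap.extend_eq gi (e := Y.subtypeL) hdr hui y
  have huniq : ∀ i, ∀ G₁ G₂ : X →L[ℝ] ℝ, (∀ y : Y, G₁ y = g i y) → (∀ y : Y, G₂ y = g i y) →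
      G₁ = G₂ := by
    intro i G₁ G₂ h1 h2
    ext x
    refine congrFun (Continuous.ext_on hY G₁.continuous G₂.continuous ?_) x
    intro xx hxx
    exact (h1 ⟨xx, hxx⟩).trans (h2 ⟨xx, hxx⟩).symm
  constructor
  · intro i
    obtain ⟨G, hG⟩ := hexist i
    exact ⟨G, hG, fun G' hG' => huniq i G' G hG' hG⟩
  -- the Bessel bound for extensions
  intro G hG f
  obtain ⟨u, hu, hulim⟩ := mem_closure_iff_seq_limit.1 (hY.closure_eq ▸ Set.mem_univ f :
    f ∈ closure (Y : Set X))
  set y : ℕ → Y := fun n => ⟨u n, hu n⟩ with hy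
  set c : ℕ → ℕ → ℝ := fun n i => g i (y n) with hc
  have hcS : ∀ n, c n ∈ S := fun n => (hB (y n)).1
  have hcdiff : ∀ m n, c m - c n = fun i => g i (y m - y n) := by
    intro m n; funext i
    simp [hc, map_sub]
  have hcauchyX : CauchySeq u := hulim.cauchySeq
  have hcauchy : ∀ ε > 0, ∃ M, ∀ m ≥ M, ∀ n ≥ M, N (c m - c n) < ε := by
    intro ε hε
    set B' : ℝ := max B 0 + 1 with hB'
    have hB'pos : 0 < B' := by positivity
    obtain ⟨M, hM⟩ := Metric.cauchySeq_iff.1 hcauchyX (ε / B') (by positivity)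
    refine ⟨M, fun m hm n hn => ?_⟩
    have h1 : N (c m - c n) ≤ B * ‖((y m - y n : Y) : X)‖ := by
      rw [hcdiff]; exact (hB (y m - y n)).2
    have h2 : ‖((y m - y n : Y) : X)‖ = dist (u m) (u n) := by
      simp [hy, dist_eq_norm]
    have h3 : dist (u m) (u n) < ε / B' := hM m hm n hn
    have h4 : B * ‖((y m - y n : Y) : X)‖ ≤ B' * ‖((y m - y n : Y) : X)‖ := by
      have : B ≤ B' := by simp [hB']; nlinarith [le_max_left B 0]
      nlinarith [norm_nonneg ((y m - y n : Y) : X)]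
    have h5 : B' * ‖((y m - y n : Y) : X)‖ < B' * (ε / B') := by
      rw [h2]; exact (mul_lt_mul_iff_right₀ hB'pos).2 h3
    have h6 : B' * (ε / B') = ε := by field_simp
    exact lt_of_le_of_lt (h1.trans h4) (h6 ▸ h5)
  obtain ⟨x, hxS, hxlim⟩ := hcomplete c hcS hcauchy
  -- identify x with (G · f)
  have hmem_sub : ∀ n, c n - x ∈ S := by
    intro n
    have : c n - x = c n + (-1 : ℝ) • x := by
      funext j; simp only [Pi.sub_apply, Pi.add_apply, Pi.smul_apply, smul_eq_mul]; ring
    rw [this]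
    exact hSadd _ (hcS n) _ (hSsmul (-1) x hxS)
  have hcoordlim : ∀ i, Tendsto (fun n => c n i) atTop (nhds (x i)) := by
    intro i
    obtain ⟨K, hKpos, hKc⟩ := hK i
    have hb : ∀ n, |c n i - x i| ≤ K * N (c n - x) := by
      intro n
      have := hKc _ (hmem_sub n)
      simpa using this
    have hrl : Tendsto (fun n => K * N (c n - x)) atTop (nhds 0) := by
      have := hxlim.const_mul K
      simpa using this
    have habs : Tendsto (fun n => |c n i - x i|) atTop (nhds 0) :=
      squeeze_zero (fun n => abs_nonneg _) hb hrl
    have : Tendsto (fun n => c n i - x i) atTop (nhds 0) :=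
      squeeze_zero_norm hb hrl
    have := this.add_const (x i)
    simpa using this
  have hGlim : ∀ i, Tendsto (fun n => c n i) atTop (nhds (G i f)) := by
    intro i
    have h1 : Tendsto (fun n => G i (u n)) atTop (nhds (G i f)) :=
      ((G i).continuous.tendsto f).comp hulim
    have h2 : (fun n => G i (u n)) = fun n => c n i := by
      funext n
      exact hG i (y n)
    rwa [h2] at h1
  have hxeq : (fun i => G i f) = x := by
    funext i
    exact tendsto_nhds_unique (hGlim i) (hcoordlim i)
  rw [hxeq]
  refine ⟨hxS, ?_⟩
  -- norm bound
  have hNx : N x ≤ B * ‖f‖ := by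
    have hev : ∀ n, N x ≤ N (c n - x) + B * ‖u n‖ := by
      intro n
      have h1 : N x = N ((x - c n) + c n) := by ring_nf
      have h2 : N ((x - c n) + c n) ≤ N (x - c n) + N (c n) :=
        hNtri _ (by
          have : x - c n = (-1 : ℝ) • (c n - x) := by
            funext j; simp only [Pi.sub_apply, Pi.smul_apply, smul_eq_mul]; ring
          rw [this]; exact hSsmul _ _ (hmem_sub n)) _ (hcS n)
      have h3 : N (x - c n) = N (c n - x) := by
        have : x - c n = (-1 : ℝ) • (c n - x) := by
          funext j; simp only [Pi.sub_apply, Pi.smul_apply, smul_eq_mul]; ring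
        rw [this, hNsmul _ _ (hmem_sub n)]; simp
      have h4 : N (c n) ≤ B * ‖((y n : Y) : X)‖ := (hB (y n)).2
      have h5 : ((y n : Y) : X) = u n := rfl
      rw [h1]
      calc N ((x - c n) + c n) ≤ N (x - c n) + N (c n) := h2
        _ = N (c n - x) + N (c n) := by rw [h3]
        _ ≤ N (c n - x) + B * ‖u n‖ := by rw [← h5]; linarith
    have hrhs : Tendsto (fun n => N (c n - x) + B * ‖u n‖) atTop (nhds (0 + B * ‖f‖)) := by
      exact hxlim.add (((continuous_norm.tendsto f).comp hulim).const_mul B)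
    simp only [zero_add] at hrhs
    exact ge_of_tendsto hrhs (Filter.Eventually.of_forall hev)
  have hBf : 0 ≤ B * ‖f‖ := le_trans (hN0 x hxS) hNx
  nlinarith [norm_nonneg f]
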